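/- Let L > 0 and let f : E → ℝ be convex with nonempty minimizer set X* and minimum value f*, and suppose f is L-QG+. Let n ∈ ℕ, let x_0, x_1, …, x_n ∈ E and g_0, g_1, …, g_n ∈ E with g_k ∈ ∂f(x_k) for 0 ≤ k ≤ n, and suppose that for every 1 ≤ k ≤ n: ⟨g_k, x_k − [ (k/(k+1))·x_{k−1} + (1/(k+1))·x_0 − (1/(k+1))·∑_{i=0}^{k−1} (1/L)·g_i ]⟩ ≤ 0. Then f(x_n) − f* ≤ (L/(2(n+1)))·d(x_0, X*)². -/

import Mathlib

open scoped RealInnerProductSpace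

set_option maxHeartbeats 1000000 in
theorem sufficient_condition_worst_case_optimal
    {E : Type*} [NormedAddCommGroup E] [InnerProductSpace ℝ E] [FiniteDimensional ℝ E]
    (L : ℝ) (hL : 0 < L) (f : E → ℝ) (hconv : ConvexOn ℝ Set.univ f)
    (Xstar : Set E) (hXstar : Xstar = {z | ∀ y, f z ≤ f y}) (hne : Xstar.Nonempty)
    (fstar : ℝ) (hfstar : ∀ z ∈ Xstar, f z = fstar)
    (hQG : ∀ z, f z - fstar ≤ L / 2 * Metric.infDist z Xstar ^ 2)
    (n : ℕ) (x g : ℕ → E)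
    (hsub : ∀ k ≤ n, ∀ y, f y ≥ f (x k) + ⟪g k, y - x k⟫)
    (hcond : ∀ k, 1 ≤ k → k ≤ n →
      ⟪g k, x k - (((k : ℝ) / ((k : ℝ) + 1)) • x (k - 1) + ((1 : ℝ) / ((k : ℝ) + 1)) • x 0
        - ((1 : ℝ) / ((k : ℝ) + 1)) • ∑ i ∈ Finset.range k, (1 / L) • g i)⟫ ≤ 0) :
    f (x n) - fstar ≤ L / (2 * ((n : ℝ) + 1)) * Metric.infDist (x 0) Xstar ^ 2 := by
  -- expansion lemma
  have expand : ∀ (b v : E), ‖b - (1/L) • v‖^2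
      = ‖b‖^2 - 2*(1/L)*⟪v, b⟫ + (1/L)^2*‖v‖^2 := by
    intro b v
    rw [norm_sub_sq_real, real_inner_smul_right, norm_smul, Real.norm_eq_abs,
      abs_of_pos (show (0:ℝ) < 1/L by positivity), real_inner_comm]
    ring
  -- key lemma from QG+
  have key : ∀ w ∈ Xstar, ∀ k, k ≤ n →
      f (x k) - fstar ≤ ⟪g k, x k - w⟫ - ‖g k‖^2 / (2*L) := by
    intro w hw k hk
    have hfw : f w = fstar := hfstar w hw
    set z := w + (1/L) • g k with hz
    have h1 : f z ≥ f (x k) + ⟪g k, z - x k⟫ := hsub k hk z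
    have h2 : Metric.infDist z Xstar ≤ ‖g k‖ / L := by
      calc Metric.infDist z Xstar ≤ dist z w := Metric.infDist_le_dist_of_mem hw
        _ = ‖(1/L) • g k‖ := by rw [dist_eq_norm]; congr 1; simp [hz]
        _ = ‖g k‖ / L := by
            rw [norm_smul, Real.norm_eq_abs, abs_of_pos (show (0:ℝ) < 1/L by positivity)]
            ring
    have h3 : f z - fstar ≤ L/2 * (‖g k‖/L)^2 := by
      refine le_trans (hQG z) ?_
      have h4 : Metric.infDist z Xstar ^ 2 ≤ (‖g k‖/L)^2 := by
        apply pow_le_pow_left₀ (Metric.infDist_nonneg) h2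
      nlinarith [h4]
    have h5 : ⟪g k, z - x k⟫ = ⟪g k, w - x k⟫ + (1/L) * ‖g k‖^2 := by
      rw [hz]
      rw [show w + (1/L) • g k - x k = (w - x k) + (1/L) • g k by abel]
      rw [inner_add_right, real_inner_smul_right, real_inner_self_eq_norm_sq]
    have h6 : ⟪g k, x k - w⟫ = -⟪g k, w - x k⟫ := by
      rw [show x k - w = -(w - x k) by abel, inner_neg_right]
    have hL2 : L/2 * (‖g k‖/L)^2 = ‖g k‖^2/(2*L) := by field_simp
    have hLinv : (1/L) * ‖g k‖^2 = ‖g k‖^2 / L := by ring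
    have hhalf : ‖g k‖^2/(2*L) - ‖g k‖^2/L = -(‖g k‖^2/(2*L)) := by
      field_simp; ring
    linarith [h1, h3, h5, h6, hL2, hLinv, hhalf]
  -- main potential inequality
  have main : ∀ w ∈ Xstar, ∀ k, k ≤ n →
      ((k:ℝ)+1) * (f (x k) - fstar)
        + L/2 * ‖x 0 - (1/L) • (∑ i ∈ Finset.range (k+1), g i) - w‖^2
      ≤ L/2 * ‖x 0 - w‖^2 := by
    intro w hw k
    induction k with
    | zero =>
      intro hk
      have hS : (∑ i ∈ Finset.range 1, g i) = g 0 := by simp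
      rw [hS]
      rw [show x 0 - (1/L) • g 0 - w = (x 0 - w) - (1/L) • g 0 by abel]
      rw [expand]
      have hkey := key w hw 0 hk
      have e1 : L/2 * (‖x 0 - w‖^2 - 2*(1/L)*⟪g 0, x 0 - w⟫ + (1/L)^2*‖g 0‖^2)
          = L/2 * ‖x 0 - w‖^2 - ⟪g 0, x 0 - w⟫ + ‖g 0‖^2/(2*L) := by
        field_simp
      rw [e1]
      push_cast
      linarith
    | succ k ih =>
      intro hk
      have hk' : k ≤ n := Nat.le_of_succ_le hk
      have ihk := ih hk'
      set S := ∑ i ∈ Finset.range (k+1), g i with hSdef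
      have hS2 : (∑ i ∈ Finset.range (k+1+1), g i) = S + g (k+1) :=
        Finset.sum_range_succ g (k+1)
      rw [hS2]
      rw [show x 0 - (1/L) • (S + g (k+1)) - w
            = (x 0 - (1/L) • S - w) - (1/L) • g (k+1) by rw [smul_add]; abel]
      set b := x 0 - (1/L) • S - w with hb
      rw [expand]
      have e1 : L/2 * (‖b‖^2 - 2*(1/L)*⟪g (k+1), b⟫ + (1/L)^2*‖g (k+1)‖^2)
          = L/2 * ‖b‖^2 - ⟪g (k+1), b⟫ + ‖g (k+1)‖^2/(2*L) := by
        field_simp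
      rw [e1]
      -- key at k+1
      have hkey := key w hw (k+1) hk
      -- subgradient step vs x k
      have hstep : f (x (k+1)) - f (x k) ≤ ⟪g (k+1), x (k+1) - x k⟫ := by
        have := hsub (k+1) hk (x k)
        have h6 : ⟪g (k+1), x k - x (k+1)⟫ = -⟪g (k+1), x (k+1) - x k⟫ := by
          rw [show x k - x (k+1) = -(x (k+1) - x k) by abel, inner_neg_right]
        linarith [this, h6.le, h6.ge]
      -- the condition, scaled
      have hc := hcond (k+1) (Nat.le_add_left 1 k) hk
      have hm1 : (k+1) - 1 = k := rfl
      have hcast : ((k+1 : ℕ) : ℝ) = (k:ℝ) + 1 := by push_cast; ring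
      have hsum : (∑ i ∈ Finset.range (k+1), (1/L) • g i) = (1/L) • S := by
        rw [hSdef, Finset.smul_sum]
      rw [hm1, hcast, hsum] at hc
      set c : ℝ := (k:ℝ) + 2 with hcdef
      have hcpos : (0:ℝ) < c := by positivity
      have hcne : c ≠ 0 := ne_of_gt hcpos
      -- expand condition inner product
      have hexp : ⟪g (k+1), x (k+1) - ((((k:ℝ)+1) / (((k:ℝ)+1) + 1)) • x k
            + ((1:ℝ) / (((k:ℝ)+1) + 1)) • x 0 - ((1:ℝ) / (((k:ℝ)+1) + 1)) • ((1/L) • S))⟫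
          = ⟪g (k+1), x (k+1)⟫ - (((k:ℝ)+1)/c) * ⟪g (k+1), x k⟫
            - (1/c) * ⟪g (k+1), x 0⟫ + (1/c) * ((1/L) * ⟪g (k+1), S⟫) := by
        rw [inner_sub_right, inner_sub_right, inner_add_right,
          real_inner_smul_right, real_inner_smul_right, real_inner_smul_right,
          real_inner_smul_right]
        rw [show ((k:ℝ)+1) + 1 = c by rw [hcdef]; ring]
        ring
      rw [hexp] at hc
      -- scalar form of what we need about b
      have hbinner : ⟪g (k+1), b⟫ = ⟪g (k+1), x 0⟫ - (1/L) * ⟪g (k+1), S⟫ - ⟪g (k+1), w⟫ := by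
        rw [hb, inner_sub_right, inner_sub_right, real_inner_smul_right]
      have hxw : ⟪g (k+1), x (k+1) - w⟫ = ⟪g (k+1), x (k+1)⟫ - ⟪g (k+1), w⟫ :=
        inner_sub_right _ _ _
      have hxx : ⟪g (k+1), x (k+1) - x k⟫ = ⟪g (k+1), x (k+1)⟫ - ⟪g (k+1), x k⟫ :=
        inner_sub_right _ _ _
      -- multiply hc by c
      have hc2 : c * (⟪g (k+1), x (k+1)⟫ - (((k:ℝ)+1)/c) * ⟪g (k+1), x k⟫
            - (1/c) * ⟪g (k+1), x 0⟫ + (1/c) * ((1/L) * ⟪g (k+1), S⟫)) ≤ 0 := by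
        exact mul_nonpos_of_nonneg_of_nonpos (le_of_lt hcpos) hc
      have hc3 : c * ⟪g (k+1), x (k+1)⟫ - ((k:ℝ)+1) * ⟪g (k+1), x k⟫
            - ⟪g (k+1), x 0⟫ + (1/L) * ⟪g (k+1), S⟫ ≤ 0 := by
        have : c * (⟪g (k+1), x (k+1)⟫ - (((k:ℝ)+1)/c) * ⟪g (k+1), x k⟫
            - (1/c) * ⟪g (k+1), x 0⟫ + (1/c) * ((1/L) * ⟪g (k+1), S⟫))
          = c * ⟪g (k+1), x (k+1)⟫ - ((k:ℝ)+1) * ⟪g (k+1), x k⟫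
            - ⟪g (k+1), x 0⟫ + (1/L) * ⟪g (k+1), S⟫ := by
          field_simp
        linarith [hc2, this.le, this.ge]
      rw [hxw] at hkey
      rw [hxx] at hstep
      rw [hcdef] at hc3
      have hstep' : ((k:ℝ)+1) * (f (x (k+1)) - f (x k))
          ≤ ((k:ℝ)+1) * (⟪g (k+1), x (k+1)⟫ - ⟪g (k+1), x k⟫) :=
        mul_le_mul_of_nonneg_left hstep (by positivity)
      push_cast
      linarith [ihk, hkey, hstep', hc3, hbinner.le, hbinner.ge]
  -- conclude
  obtain ⟨w0, hw0⟩ := hne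
  have hfn_nonneg : 0 ≤ f (x n) - fstar := by
    have : f w0 ≤ f (x n) := by rw [hXstar] at hw0; exact hw0 (x n)
    have := hfstar w0 hw0
    linarith
  have hbound : ∀ w ∈ Xstar, ((n:ℝ)+1) * (f (x n) - fstar) ≤ L/2 * dist (x 0) w ^2 := by
    intro w hw
    have := main w hw n le_rfl
    have hnn : 0 ≤ L/2 * ‖x 0 - (1/L) • (∑ i ∈ Finset.range (n+1), g i) - w‖^2 := by
      positivity
    rw [dist_eq_norm]
    linarith
  set c := Real.sqrt ((2*((n:ℝ)+1)/L) * (f (x n) - fstar)) with hcdef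
  have hcnn : 0 ≤ c := Real.sqrt_nonneg _
  have hcsq : c^2 = (2*((n:ℝ)+1)/L) * (f (x n) - fstar) := by
    rw [hcdef, Real.sq_sqrt]; positivity
  have hcle : c ≤ Metric.infDist (x 0) Xstar := by
    by_contra h
    push_neg at h
    obtain ⟨w, hw, hd⟩ := (Metric.infDist_lt_iff ⟨w0, hw0⟩).mp h
    have h1 := hbound w hw
    have h2 : dist (x 0) w ^ 2 < c^2 := by
      have := dist_nonneg (x := x 0) (y := w)
      nlinarith
    rw [hcsq] at h2
    have h3 := mul_lt_mul_of_pos_left h2 (show (0:ℝ) < L/2 by positivity)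
    have h4 : L/2 * ((2*((n:ℝ)+1)/L) * (f (x n) - fstar)) = ((n:ℝ)+1) * (f (x n) - fstar) := by
      field_simp
    linarith
  have hsq : c^2 ≤ Metric.infDist (x 0) Xstar ^2 :=
    pow_le_pow_left₀ hcnn hcle 2
  rw [hcsq] at hsq
  have hpos : (0:ℝ) < L/(2*((n:ℝ)+1)) := by positivity
  have h5 := mul_le_mul_of_nonneg_left hsq (le_of_lt hpos)
  have h6 : L/(2*((n:ℝ)+1)) * ((2*((n:ℝ)+1)/L) * (f (x n) - fstar)) = f (x n) - fstar := by
    field_simp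
  linarith
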